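/- arXiv:2504.16690 — 2 statements merged into one kernel-verified Lean document; each statement's English description precedes it below -/
import Mathlib

section
/- Let B be a bicategory and f : A ⟶ B a 1-cell such that for every object Z the precomposition functor (− ∘ f) : B(B,Z) ⥤ B(A,Z) reflects isomorphisms (f is corepresentably surjective). Let X and Y be objects that are right Kan injective with respect to f, meaning every 1-cell x : A ⟶ X admits a right Kan extension ran_f x along f whose counit 2-cell ran_f x ∘ f ⟶ x is invertible, and likewise for Y. Then every 1-cell g : X ⟶ Y preserves these right Kan extensions: for every x : A ⟶ X, the pair (g ∘ ran_f x, g ◁ ε) is a right Kan extension of g ∘ x along f. -/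
universe w v u

open CategoryTheory CategoryTheory.Bicategory

variable {B : Type u} [Bicategory.{w, v} B]

/-- `(r, ε)` is a right Kan extension of `x : A ⟶ X` along `f : A ⟶ Y`. -/
def IsRanCounit {A Y X : B} (f : A ⟶ Y) (x : A ⟶ X) (r : Y ⟶ X) (ε' : f ≫ r ⟶ x) : Prop :=
  ∀ (y : Y ⟶ X) (α : f ≫ y ⟶ x), ∃! τ : y ⟶ r, f ◁ τ ≫ ε' = α

/-- If `f` is corepresentably surjective (precomposition with `f` reflects isomorphisms)
and `X`, `Y` are right Kan injective along `f` (every 1-cell into them has a right Kan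
extension along `f` with invertible counit), then every 1-cell `g : X ⟶ Y` preserves
these right Kan extensions. -/
theorem statement1 {A B' X Y : B} (f : A ⟶ B')
    (hf : ∀ (Z : B) (y y' : B' ⟶ Z) (τ : y ⟶ y'), IsIso (f ◁ τ) → IsIso τ)
    (rX : (A ⟶ X) → (B' ⟶ X)) (εX : ∀ x : A ⟶ X, f ≫ rX x ⟶ x)
    (hXran : ∀ x : A ⟶ X, IsRanCounit f x (rX x) (εX x))
    (hXiso : ∀ x : A ⟶ X, IsIso (εX x))
    (rY : (A ⟶ Y) → (B' ⟶ Y)) (εY : ∀ x : A ⟶ Y, f ≫ rY x ⟶ x)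
    (hYran : ∀ x : A ⟶ Y, IsRanCounit f x (rY x) (εY x))
    (hYiso : ∀ x : A ⟶ Y, IsIso (εY x))
    (g : X ⟶ Y) (x : A ⟶ X) :
    IsRanCounit f (x ≫ g) (rX x ≫ g) ((α_ f (rX x) g).inv ≫ εX x ▷ g) := by
  obtain ⟨φ, hφ, -⟩ := hYran (x ≫ g) (rX x ≫ g) ((α_ f (rX x) g).inv ≫ εX x ▷ g)
  have hXi := hXiso x
  have hYi := hYiso (x ≫ g)
  have hwiso : IsIso (f ◁ φ) := by
    have heq : f ◁ φ = ((α_ f (rX x) g).inv ≫ εX x ▷ g) ≫ CategoryTheory.inv (εY (x ≫ g)) := by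
      rw [← hφ]; simp
    rw [heq]; infer_instance
  have hφiso : IsIso φ := hf _ _ _ _ hwiso
  intro y α
  obtain ⟨τ, hτ, hτuniq⟩ := hYran (x ≫ g) y α
  refine ⟨τ ≫ CategoryTheory.inv φ, ?_, ?_⟩
  · rw [← hφ]
    simp only [Bicategory.whiskerLeft_comp, Category.assoc, ← Bicategory.whiskerLeft_comp_assoc, IsIso.inv_hom_id,
      Bicategory.whiskerLeft_id, Category.id_comp]
    exact hτ
  · intro σ hσ
    have h1 : σ ≫ φ = τ := by
      apply hτuniq
      rw [Bicategory.whiskerLeft_comp, Category.assoc, hφ]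
      exact hσ
    rw [← h1]; simp
end

section
/- Let B be a bicategory and f : A ⟶ B a 1-cell such that for every object Z the precomposition functor (− ∘ f) : B(B,Z) ⥤ B(A,Z) is fully faithful (f is corepresentably fully surjective). Then for every object X the following are equivalent: (a) every 1-cell x : A ⟶ X admits a right Kan extension along f whose counit is invertible; (b) every 1-cell x : A ⟶ X admits a left Kan extension along f whose unit is invertible; (c) the precomposition functor (− ∘ f) : B(B,X) ⥤ B(A,X) is an equivalence of categories. -/
universe w v u

open CategoryTheory CategoryTheory.Bicategory

variable {B : Type u} [Bicategory.{w, v} B]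

/-- `(l, η)` is a left Kan extension of `x : A ⟶ X` along `f : A ⟶ Y`. -/
def IsLanUnit {A Y X : B} (f : A ⟶ Y) (x : A ⟶ X) (l : Y ⟶ X) (η : x ⟶ f ≫ l) : Prop :=
  ∀ (y : Y ⟶ X) (α : x ⟶ f ≫ y), ∃! τ : l ⟶ y, η ≫ f ◁ τ = α

/-- If `f` is corepresentably fully surjective (precomposition with `f` is fully faithful),
then for every object `X` the following are equivalent: (a) every 1-cell `A ⟶ X` has a
right Kan extension along `f` with invertible counit; (b) every 1-cell `A ⟶ X` has a left
Kan extension along `f` with invertible unit; (c) the precomposition functor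
`(− ∘ f) : (B' ⟶ X) ⥤ (A ⟶ X)` is an equivalence of categories. -/
theorem statement2 {A B' : B} (f : A ⟶ B')
    (hf : ∀ (Z : B) (y y' : B' ⟶ Z),
      Function.Bijective (fun τ : y ⟶ y' => f ◁ τ))
    (X : B) :
    ((∀ x : A ⟶ X, ∃ (r : B' ⟶ X) (ε' : f ≫ r ⟶ x), IsRanCounit f x r ε' ∧ IsIso ε') ↔
      (Bicategory.precomp X f).IsEquivalence) ∧
    ((∀ x : A ⟶ X, ∃ (l : B' ⟶ X) (η : x ⟶ f ≫ l), IsLanUnit f x l η ∧ IsIso η) ↔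
      (Bicategory.precomp X f).IsEquivalence) := by
  have hfull : (Bicategory.precomp X f).Full :=
    ⟨fun {y y'} τ => ⟨(hf X y y').2 τ |>.choose, (hf X y y').2 τ |>.choose_spec⟩⟩
  have hfaith : (Bicategory.precomp X f).Faithful :=
    ⟨fun {y y'} {τ σ} h => (hf X y y').1 h⟩
  constructor
  · constructor
    · intro h
      have : (Bicategory.precomp X f).EssSurj :=
        ⟨fun x => by
          obtain ⟨r, ε', _, hiso⟩ := h x
          exact ⟨r, ⟨@asIso _ _ _ _ ε' hiso⟩⟩⟩
      exact { }
    · intro h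
      intro x
      have : (Bicategory.precomp X f).EssSurj := h.essSurj
      obtain ⟨r, ⟨e⟩⟩ := this.mem_essImage x
      refine ⟨r, e.hom, ?_, Iso.isIso_hom e⟩
      intro y α
      obtain ⟨τ, hτ⟩ := (hf X y r).2 (α ≫ e.inv)
      simp only at hτ
      refine ⟨τ, ?_, ?_⟩
      · show f ◁ τ ≫ e.hom = α
        rw [hτ]; exact (Category.assoc _ _ _).trans ((congrArg (fun t => α ≫ t) e.inv_hom_id).trans (Category.comp_id α))
      · intro σ hσ
        apply (hf X y r).1
        show f ◁ σ = f ◁ τ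
        rw [hτ, ← hσ]; exact ((Category.assoc _ _ _).trans ((congrArg (fun t => f ◁ σ ≫ t) e.hom_inv_id).trans (Category.comp_id _))).symm
  · constructor
    · intro h
      have : (Bicategory.precomp X f).EssSurj :=
        ⟨fun x => by
          obtain ⟨l, η, _, hiso⟩ := h x
          exact ⟨l, ⟨(asIso η).symm⟩⟩⟩
      exact { }
    · intro h
      intro x
      have : (Bicategory.precomp X f).EssSurj := h.essSurj
      obtain ⟨l, ⟨e⟩⟩ := this.mem_essImage x
      refine ⟨l, e.inv, ?_, Iso.isIso_inv e⟩
      intro y α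
      obtain ⟨τ, hτ⟩ := (hf X l y).2 (e.hom ≫ α)
      simp only at hτ
      refine ⟨τ, ?_, ?_⟩
      · show e.inv ≫ f ◁ τ = α
        rw [hτ]; simp
      · intro σ hσ
        apply (hf X l y).1
        show f ◁ σ = f ◁ τ
        rw [hτ, ← hσ]; exact (e.hom_inv_id_assoc _).symm
end
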